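/- Let F satisfy Assumption 2 and a > 0, and let b_F and g be the unique constant and the unique differentiable solution on ℝ of g'(x) = a·x² − b_F − F(g(x)) with x·g(x) ≤ 0 for all x ∈ ℝ. Then there exists a constant K > 0 such that |g(x)| ≤ K·(1 + |x|) and |g'(x)| ≤ K for all x ∈ ℝ. -/

import Mathlib

/-- Assumption 2 on the function `F`. -/
structure Assumption2 (F : ℝ → ℝ) : Prop where
  convex : ConvexOn ℝ Set.univ F
  diff : Differentiable ℝ F
  even : ∀ x : ℝ, F (-x) = F x
  strictMonoOn : StrictMonoOn F (Set.Ici 0)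
  map_zero : F 0 = 0
  deriv_diffOn : ∀ x ∈ Set.Ici (0 : ℝ), DifferentiableAt ℝ (deriv F) x
  deriv_strictMonoOn : StrictMonoOn (deriv F) (Set.Ici 0)
  deriv_zero : deriv F 0 = 0
  growth : ∃ K > (0 : ℝ), ∃ p : ℝ, 2 ≤ p ∧ ∀ x : ℝ, F x ≤ K * (1 + |x| ^ p)
  second_deriv_lb : ∃ C > (0 : ℝ), ∃ x₀ > (0 : ℝ), ∀ x : ℝ, x₀ < |x| → C < deriv (deriv F) x


open Set Filter Topology

lemma stmt13_Fnn {F : ℝ → ℝ} (hF : Assumption2 F) : ∀ y : ℝ, 0 ≤ y → 0 ≤ F y := by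
  intro y hy
  rcases hy.eq_or_lt with h | h
  · rw [← h, hF.map_zero]
  · have := hF.strictMonoOn (Set.mem_Ici.mpr le_rfl) (Set.mem_Ici.mpr hy) h
    rw [hF.map_zero] at this
    exact this.le

lemma stmt13_dFnn {F : ℝ → ℝ} (hF : Assumption2 F) : ∀ y : ℝ, 0 ≤ y → 0 ≤ deriv F y := by
  intro y hy
  rcases hy.eq_or_lt with h | h
  · rw [← h, hF.deriv_zero]
  · have := hF.deriv_strictMonoOn (Set.mem_Ici.mpr le_rfl) (Set.mem_Ici.mpr hy) h
    rw [hF.deriv_zero] at this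
    exact this.le

lemma stmt13_dFodd {F : ℝ → ℝ} (hF : Assumption2 F) :
    ∀ y : ℝ, deriv F (-y) = - deriv F y := by
  intro y
  have hEF : (fun x : ℝ => F (-x)) = F := funext hF.even
  have h1 : HasDerivAt (fun x : ℝ => F (-x)) (deriv F (-y) * (-1)) y :=
    (hF.diff (-y)).hasDerivAt.comp y (hasDerivAt_neg y)
  rw [hEF] at h1
  have h2 := h1.deriv
  linarith [h2]

lemma stmt13_slope {F : ℝ → ℝ} (hF : Assumption2 F) :
    ∀ y : ℝ, 0 < y → F y ≤ y * deriv F y := by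
  intro y hy
  have h := hF.convex.slope_le_deriv (Set.mem_univ 0) (Set.mem_univ y) hy (hF.diff y)
  rw [slope_def_field, hF.map_zero, sub_zero, sub_zero] at h
  calc F y = (F y / y) * y := by field_simp
    _ ≤ deriv F y * y := mul_le_mul_of_nonneg_right h hy.le
    _ = y * deriv F y := mul_comm _ _

lemma stmt13_dFlb {F : ℝ → ℝ} (hF : Assumption2 F) {C x₀ : ℝ} (hC : 0 < C) (hx₀ : 0 < x₀)
    (hC2 : ∀ x : ℝ, x₀ < |x| → C < deriv (deriv F) x) :
    ∀ y : ℝ, x₀ < y → C * (y - x₀) ≤ deriv F y := by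
  intro y hy
  obtain ⟨ξ, hξ, hs⟩ := exists_hasDerivAt_eq_slope (deriv F) (deriv (deriv F)) hy
    (fun t ht => (hF.deriv_diffOn t (Set.mem_Ici.mpr (le_trans hx₀.le ht.1))).continuousAt.continuousWithinAt)
    (fun t ht => (hF.deriv_diffOn t (Set.mem_Ici.mpr (le_trans hx₀.le ht.1.le))).hasDerivAt)
  have hξpos : x₀ < ξ := hξ.1
  have h1 : C < deriv (deriv F) ξ := hC2 ξ (by rw [abs_of_pos (lt_trans hx₀ hξpos)]; exact hξpos)
  rw [hs] at h1
  have h2 : 0 ≤ deriv F x₀ := stmt13_dFnn hF x₀ hx₀.le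
  have h3 : 0 < y - x₀ := by linarith
  have h4 := (lt_div_iff₀ h3).mp h1
  linarith

lemma stmt13_quad {F : ℝ → ℝ} (hF : Assumption2 F) {C x₀ : ℝ} (hC : 0 < C) (hx₀ : 0 < x₀)
    (hC2 : ∀ x : ℝ, x₀ < |x| → C < deriv (deriv F) x) :
    ∀ y : ℝ, 2 * x₀ ≤ y → C / 16 * y ^ 2 ≤ F y := by
  intro y hy
  have hx₀y : x₀ < y := by linarith
  set m := (x₀ + y) / 2 with hm
  have hm1 : x₀ < m := by rw [hm]; linarith
  have hm2 : m < y := by rw [hm]; linarith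
  obtain ⟨ξ, hξ, hs⟩ := exists_hasDerivAt_eq_slope F (deriv F) hm2
    (hF.diff.continuous.continuousOn) (fun t _ => (hF.diff t).hasDerivAt)
  have hξ1 : C * (ξ - x₀) ≤ deriv F ξ := stmt13_dFlb hF hC hx₀ hC2 ξ (lt_trans hm1 hξ.1)
  have hFm : 0 ≤ F m := stmt13_Fnn hF m (by linarith)
  have h3 : 0 < y - m := by linarith
  have h4 : C * (ξ - x₀) * (y - m) ≤ F y - F m := by
    rw [hs] at hξ1
    have := (le_div_iff₀ h3).mp hξ1
    linarith
  have h5 : C * (m - x₀) * (y - m) ≤ C * (ξ - x₀) * (y - m) := by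
    have h : m - x₀ ≤ ξ - x₀ := by linarith [hξ.1]
    exact mul_le_mul_of_nonneg_right (mul_le_mul_of_nonneg_left h hC.le) h3.le
  have h6 : C * (m - x₀) * (y - m) = C / 4 * (y - x₀) ^ 2 := by rw [hm]; ring
  nlinarith [mul_nonneg (mul_nonneg hC.le (by linarith : (0:ℝ) ≤ y - 2*x₀))
      (by linarith : (0:ℝ) ≤ 3*y - 2*x₀), h4, h5, h6, hFm]



/-- First-touching-point lemma: if a differentiable `f` is negative at `x₁` but not negative
everywhere to the right, there is a first zero `x₂ > x₁`, and there `deriv f x₂ ≥ 0`. -/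
lemma stmt13_touch (f : ℝ → ℝ) (hf : Differentiable ℝ f) {x₁ : ℝ} (h1 : f x₁ < 0)
    (h2 : ¬ ∀ x, x₁ ≤ x → f x < 0) :
    ∃ x₂, x₁ < x₂ ∧ f x₂ = 0 ∧ (∀ x, x₁ ≤ x → x < x₂ → f x < 0) ∧ 0 ≤ deriv f x₂ := by
  push_neg at h2
  obtain ⟨x₃, hx₃, hfx₃⟩ := h2
  set S : Set ℝ := {x | x₁ ≤ x ∧ 0 ≤ f x} with hS
  have hSne : S.Nonempty := ⟨x₃, hx₃, hfx₃⟩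
  have hSbdd : BddBelow S := ⟨x₁, fun x hx => hx.1⟩
  have hScl : IsClosed S := by
    have : S = Ici x₁ ∩ {x | 0 ≤ f x} := by ext x; simp [hS, Set.mem_Ici]
    rw [this]
    exact isClosed_Ici.inter (isClosed_le continuous_const hf.continuous)
  set x₂ := sInf S with hx₂def
  have hx₂S : x₂ ∈ S := hScl.csInf_mem hSne hSbdd
  have hx₁lt : x₁ < x₂ := by
    rcases hx₂S.1.lt_or_eq with h | h
    · exact h
    · exfalso; rw [← h] at hx₂S; exact absurd hx₂S.2 (not_le.mpr h1)
  have hbelow : ∀ x, x₁ ≤ x → x < x₂ → f x < 0 := by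
    intro x hx hxx
    by_contra h
    push_neg at h
    exact absurd (csInf_le hSbdd ⟨hx, h⟩) (not_le.mpr hxx)
  have hzero : f x₂ = 0 := by
    refine le_antisymm ?_ hx₂S.2
    have ht : Tendsto f (𝓝[<] x₂) (𝓝 (f x₂)) :=
      (hf.continuous.continuousAt).mono_left nhdsWithin_le_nhds
    refine le_of_tendsto ht ?_
    filter_upwards [Ioo_mem_nhdsLT hx₁lt] with x hx
    exact (hbelow x hx.1.le hx.2).le
  refine ⟨x₂, hx₁lt, hzero, hbelow, ?_⟩
  have hd : HasDerivWithinAt f (deriv f x₂) (Iio x₂) x₂ :=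
    (hf x₂).hasDerivAt.hasDerivWithinAt
  rw [hasDerivWithinAt_iff_tendsto_slope] at hd
  have hrw : Iio x₂ \ {x₂} = Iio x₂ := by
    ext t; simp +contextual [Set.mem_diff, and_iff_left_iff_imp, ne_of_lt]
  rw [hrw] at hd
  refine ge_of_tendsto hd ?_
  have hmem : Ioo x₁ x₂ ∈ 𝓝[Iio x₂] x₂ := Ioo_mem_nhdsLT hx₁lt
  filter_upwards [hmem] with x hx
  have hfx : f x < 0 := hbelow x hx.1.le hx.2
  rw [slope_def_field]
  rw [hzero, sub_zero]
  exact le_of_lt (div_pos_of_neg_of_neg hfx (sub_neg.mpr hx.2))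

set_option maxHeartbeats 1000000 in
lemma stmt13_aux (F : ℝ → ℝ) (hF : Assumption2 F) (a bF : ℝ) (ha : 0 < a) (g : ℝ → ℝ)
    (hg : Differentiable ℝ g)
    (hode : ∀ x : ℝ, deriv g x = a * x ^ 2 - bF - F (g x))
    (hsign : ∀ x : ℝ, x * g x ≤ 0) :
    ∃ K > (0 : ℝ), ∀ x : ℝ, 0 ≤ x → |g x| ≤ K * (1 + x) ∧ |deriv g x| ≤ K := by
  obtain ⟨C, hC, x₀, hx₀, hC2⟩ := hF.second_deriv_lb
  -- the constant L for the bound on g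
  obtain ⟨L, hL1, hLx₀, hLC⟩ :
      ∃ L : ℝ, 1 ≤ L ∧ 2 * x₀ ≤ L ∧ 64 * (a + |bF| + 1) ≤ C * L := by
    refine ⟨max 1 (max (2 * x₀) (64 * (a + |bF| + 1) / C)), le_max_left _ _,
      le_trans (le_max_left _ _) (le_max_right _ _), ?_⟩
    have h : 64 * (a + |bF| + 1) / C ≤ max 1 (max (2 * x₀) (64 * (a + |bF| + 1) / C)) :=
      le_trans (le_max_right _ _) (le_max_right 1 _)
    rw [div_le_iff₀ hC] at h
    linarith [mul_comm (max 1 (max (2 * x₀) (64 * (a + |bF| + 1) / C))) C]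
  have hLpos : 0 < L := lt_of_lt_of_le one_pos hL1
  -- the constant for the derivative bound
  obtain ⟨μ, hμdef⟩ : ∃ μ : ℝ, μ = 4 * L + |bF| + a * L + 1 := ⟨_, rfl⟩
  have hμL : L < μ := by
    have := abs_nonneg bF
    have := mul_nonneg ha.le hLpos.le
    rw [hμdef]; linarith
  have hμpos : 0 < μ := lt_trans hLpos hμL
  have hμ1 : 1 ≤ μ := le_trans hL1 hμL.le
  -- sign facts for g
  have hgneg' : ∀ x : ℝ, 0 < x → g x ≤ 0 := by
    intro x hx
    by_contra h
    push_neg at h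
    nlinarith [hsign x]
  have hgpos' : ∀ x : ℝ, x < 0 → 0 ≤ g x := by
    intro x hx
    by_contra h
    push_neg at h
    nlinarith [hsign x]
  have hg0 : g 0 = 0 := by
    have ht1 : Tendsto g (𝓝[>] (0:ℝ)) (𝓝 (g 0)) :=
      (hg.continuous.continuousAt).mono_left nhdsWithin_le_nhds
    have ht2 : Tendsto g (𝓝[<] (0:ℝ)) (𝓝 (g 0)) :=
      (hg.continuous.continuousAt).mono_left nhdsWithin_le_nhds
    have h1 : g 0 ≤ 0 := by
      refine le_of_tendsto ht1 ?_
      filter_upwards [self_mem_nhdsWithin] with x hx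
      exact hgneg' x hx
    have h2 : 0 ≤ g 0 := by
      refine ge_of_tendsto ht2 ?_
      filter_upwards [self_mem_nhdsWithin] with x hx
      exact hgpos' x hx
    linarith
  have hgle : ∀ x : ℝ, 0 ≤ x → g x ≤ 0 := by
    intro x hx
    rcases hx.eq_or_lt with h | h
    · rw [← h, hg0]
    · exact hgneg' x h
  -- quadratic lower bound for F
  have hquad := stmt13_quad hF hC hx₀ hC2
  -- barrier inequality
  have hbar : ∀ t : ℝ, 0 ≤ t → a * t ^ 2 + |bF| + L < F (L * (1 + t)) := by
    intro t ht
    have h2x : 2 * x₀ ≤ L * (1 + t) := by nlinarith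
    have hq := hquad (L * (1 + t)) h2x
    have hLt2 : (0:ℝ) ≤ L * (1 + t ^ 2) := by positivity
    have e1 : C * L / 16 * (L * (1 + t ^ 2)) ≤ C / 16 * (L * (1 + t)) ^ 2 := by
      nlinarith [mul_nonneg (mul_nonneg (mul_nonneg hC.le hLpos.le) hLpos.le) ht]
    have e2 : 4 * (a + |bF| + 1) * (L * (1 + t ^ 2)) ≤ C * L / 16 * (L * (1 + t ^ 2)) :=
      mul_le_mul_of_nonneg_right (by linarith) hLt2
    have e3 : a * t ^ 2 + |bF| + L < 4 * (a + |bF| + 1) * (L * (1 + t ^ 2)) := by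
      nlinarith [mul_nonneg ha.le (sq_nonneg t), abs_nonneg bF, hL1,
        mul_nonneg (abs_nonneg bF) hLpos.le, mul_nonneg (abs_nonneg bF) (sq_nonneg t),
        mul_nonneg (mul_nonneg (abs_nonneg bF) hLpos.le) (sq_nonneg t),
        mul_nonneg (mul_nonneg ha.le hLpos.le) (sq_nonneg t), mul_nonneg hLpos.le (sq_nonneg t)]
    linarith [hq, e1, e2, e3]
  -- lower bound on g for x ≥ 0
  have hlb : ∀ x : ℝ, 0 ≤ x → -(L * (1 + x)) ≤ g x := by
    by_contra hcon
    push_neg at hcon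
    obtain ⟨x₁, hx₁0, hx₁⟩ := hcon
    set f : ℝ → ℝ := fun x => g x + L * (1 + x) with hfdef
    have hfd : Differentiable ℝ f := by
      apply hg.add
      apply Differentiable.const_mul
      exact (differentiable_const (1:ℝ)).add differentiable_id
    have hfder : ∀ x : ℝ, deriv f x = deriv g x + L := by
      intro x
      have hq : HasDerivAt (fun y : ℝ => L * (1 + y)) L x := by
        simpa using ((hasDerivAt_id x).const_add (1:ℝ)).const_mul L
      exact ((hg x).hasDerivAt.add hq).deriv
    have hf1 : f x₁ < 0 := by
      have : f x₁ = g x₁ + L * (1 + x₁) := rfl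
      linarith
    have hall : ∀ x, x₁ ≤ x → f x < 0 := by
      by_contra h2
      obtain ⟨x₂, hx₂gt, hx₂0, _, hx₂d⟩ := stmt13_touch f hfd hf1 h2
      have hx₂nn : 0 ≤ x₂ := le_trans hx₁0 hx₂gt.le
      have hgd : g x₂ = -(L * (1 + x₂)) := by
        have : f x₂ = g x₂ + L * (1 + x₂) := rfl
        linarith
      have hFg : F (g x₂) = F (L * (1 + x₂)) := by rw [hgd, hF.even]
      have hb := hbar x₂ hx₂nn
      have : deriv f x₂ < 0 := by
        rw [hfder, hode, hFg]
        have := neg_abs_le bF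
        linarith
      linarith
    -- Riccati argument
    have hglt : ∀ x, x₁ ≤ x → g x < -(L * (1 + x)) := by
      intro x hx
      have h := hall x hx
      have : f x = g x + L * (1 + x) := rfl
      linarith
    have hgneg : ∀ x, x₁ ≤ x → g x < 0 := by
      intro x hx
      have h1 := hglt x hx
      have h2 : 0 ≤ x := le_trans hx₁0 hx
      nlinarith
    have hderiv_le : ∀ x, x₁ ≤ x → deriv g x ≤ -(C / 32) * (g x) ^ 2 := by
      intro x hx
      have hx0 : 0 ≤ x := le_trans hx₁0 hx
      have h1 : L * (1 + x) < -g x := by linarith [hglt x hx]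
      have h2 : 2 * x₀ ≤ -g x := by nlinarith
      have hq := hquad (-g x) h2
      rw [hF.even] at hq
      have hmgL : L ≤ -g x := by nlinarith
      have hmgx : L * x ≤ -g x := by nlinarith [mul_nonneg hLpos.le hx0]
      have hL2 : (L * x) ^ 2 ≤ (g x) ^ 2 := by
        nlinarith [mul_nonneg hLpos.le hx0, hmgx]
      have hg2L : L ^ 2 ≤ (g x) ^ 2 := by nlinarith [hmgL, hLpos]
      have hCL : C * L ≤ C * L ^ 2 := by
        nlinarith [mul_nonneg (mul_nonneg hC.le hLpos.le) (by linarith : (0:ℝ) ≤ L - 1)]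
      have haC : 64 * a ≤ C * L ^ 2 := by
        have := abs_nonneg bF
        linarith
      have hbC : 64 * |bF| ≤ C * L ^ 2 := by linarith [ha.le]
      have h3 : 64 * (a * x ^ 2) ≤ C * (g x) ^ 2 := by
        nlinarith [mul_le_mul_of_nonneg_left hL2 hC.le,
          mul_le_mul_of_nonneg_right haC (sq_nonneg x)]
      have h4 : 64 * (-bF) ≤ C * (g x) ^ 2 := by
        have h41 : C * L ^ 2 ≤ C * (g x) ^ 2 := by
          nlinarith [mul_le_mul_of_nonneg_left hg2L hC.le]
        linarith [neg_abs_le bF]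
      rw [hode]
      nlinarith [hq]
    have hc32 : 0 < C / 32 := by positivity
    set w : ℝ → ℝ := fun x => (g x)⁻¹ with hwdef
    have hwd : ∀ x, x₁ ≤ x → HasDerivAt w (-(deriv g x) / (g x) ^ 2) x := by
      intro x hx
      exact ((hg x).hasDerivAt).inv (ne_of_lt (hgneg x hx))
    have hwx₁ : w x₁ < 0 := by
      have : w x₁ = (g x₁)⁻¹ := rfl
      rw [this]
      exact inv_lt_zero.mpr (hgneg x₁ le_rfl)
    set X := x₁ + (1 - w x₁) / (C / 32) with hXdef
    have hX : x₁ < X := by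
      rw [hXdef]
      have : 0 < (1 - w x₁) / (C / 32) := div_pos (by linarith) hc32
      linarith
    obtain ⟨ξ, hξ, hs⟩ := exists_hasDerivAt_eq_slope w (fun x => -(deriv g x) / (g x) ^ 2) hX
      (fun t ht => (hwd t ht.1).continuousAt.continuousWithinAt)
      (fun t ht => hwd t ht.1.le)
    have hgξ := hgneg ξ hξ.1.le
    have hsq : 0 < (g ξ) ^ 2 := by nlinarith
    have h5 : C / 32 ≤ -(deriv g ξ) / (g ξ) ^ 2 := by
      rw [le_div_iff₀ hsq]
      have := hderiv_le ξ hξ.1.le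
      nlinarith
    rw [hs] at h5
    have hXpos : 0 < X - x₁ := by linarith
    have h6 : C / 32 * (X - x₁) ≤ w X - w x₁ := by
      rw [le_div_iff₀ hXpos] at h5
      linarith
    have h7 : C / 32 * (X - x₁) = 1 - w x₁ := by
      rw [hXdef]
      field_simp
      ring
    have hwX : w X < 0 := by
      have : w X = (g X)⁻¹ := rfl
      rw [this]
      exact inv_lt_zero.mpr (hgneg X hX.le)
    linarith
  -- derivative of u = deriv g
  set u : ℝ → ℝ := fun x => deriv g x with hudef
  have hud : ∀ x : ℝ, HasDerivAt u (2 * a * x - deriv F (g x) * deriv g x) x := by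
    intro x
    have hq : HasDerivAt (fun y : ℝ => a * y ^ 2) (a * (2 * x)) x := by
      simpa using (hasDerivAt_pow 2 x).const_mul a
    have hcmp : HasDerivAt (fun y : ℝ => F (g y)) (deriv F (g x) * deriv g x) x :=
      (hF.diff (g x)).hasDerivAt.comp x (hg x).hasDerivAt
    have h1 := (hq.sub_const bF).sub hcmp
    have h2 : u = fun y : ℝ => a * y ^ 2 - bF - F (g y) := funext hode
    rw [h2]
    exact h1.congr_deriv (by ring)
  have hu_diff : Differentiable ℝ u := fun x => (hud x).differentiableAt
  -- upper bound for deriv g on x ≥ 0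
  have hub : ∀ x : ℝ, 0 ≤ x → deriv g x ≤ μ := by
    intro x₁ hx₁0
    by_contra hx₁
    push_neg at hx₁
    set f : ℝ → ℝ := fun x => μ - u x with hfdef
    have hfd : Differentiable ℝ f := (differentiable_const μ).sub hu_diff
    have hf1 : f x₁ < 0 := by
      show μ - deriv g x₁ < 0
      linarith
    by_cases hall : ∀ x, x₁ ≤ x → f x < 0
    · -- u > μ to the right : g grows above 0, contradiction
      set X := x₁ + (1 - g x₁) / μ with hXdef
      have hgx₁ : g x₁ ≤ 0 := hgle x₁ hx₁0
      have hX : x₁ < X := by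
        rw [hXdef]
        have : 0 < (1 - g x₁) / μ := div_pos (by linarith) hμpos
        linarith
      obtain ⟨ξ, hξ, hs⟩ := exists_hasDerivAt_eq_slope g (deriv g) hX
        (hg.continuous.continuousOn) (fun t _ => (hg t).hasDerivAt)
      have hfξ : μ - deriv g ξ < 0 := hall ξ hξ.1.le
      have hXpos : 0 < X - x₁ := by linarith
      have h1 : μ * (X - x₁) < g X - g x₁ := by
        rw [hs] at hfξ
        have h2 : μ < (g X - g x₁) / (X - x₁) := by linarith
        exact (lt_div_iff₀ hXpos).mp h2
      have h3 : μ * (X - x₁) = 1 - g x₁ := by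
        rw [hXdef]
        field_simp
        ring
      have h4 : g X ≤ 0 := hgle X (by linarith)
      linarith
    · obtain ⟨x₂, hx₂gt, hx₂0, _, hx₂d⟩ := stmt13_touch f hfd hf1 hall
      have hux₂ : deriv g x₂ = μ := by
        have h0 : μ - deriv g x₂ = 0 := hx₂0
        linarith
      have hdf : deriv f x₂ = -(2 * a * x₂ - deriv F (g x₂) * deriv g x₂) := by
        exact ((hud x₂).const_sub μ).deriv
      have hx₂pos : 0 < x₂ := lt_of_le_of_lt hx₁0 hx₂gt
      have hgx₂ : g x₂ ≤ 0 := hgle x₂ hx₂pos.le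
      have hFd : deriv F (g x₂) ≤ 0 := by
        have h7 := stmt13_dFodd hF (-(g x₂))
        rw [neg_neg] at h7
        have h8 := stmt13_dFnn hF (-(g x₂)) (by linarith)
        linarith
      have h9 : deriv F (g x₂) * deriv g x₂ ≤ 0 := by
        rw [hux₂]
        exact mul_nonpos_iff.mpr (Or.inr ⟨hFd, hμpos.le⟩)
      rw [hdf] at hx₂d
      nlinarith [mul_pos ha hx₂pos]
  -- lower bound for deriv g on x ≥ 0
  have hlb' : ∀ x : ℝ, 0 ≤ x → -μ ≤ deriv g x := by
    intro x₁ hx₁0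
    by_contra hx₁
    push_neg at hx₁
    set f : ℝ → ℝ := fun x => u x + μ with hfdef
    have hfd : Differentiable ℝ f := hu_diff.add_const μ
    have hf1 : f x₁ < 0 := by
      show deriv g x₁ + μ < 0
      linarith
    by_cases hall : ∀ x, x₁ ≤ x → f x < 0
    · -- u < -μ to the right : g decreases faster than its linear lower bound
      have hD : 0 ≤ g x₁ + L * (1 + x₁) := by linarith [hlb x₁ hx₁0]
      set D := g x₁ + L * (1 + x₁) with hDdef
      set X := x₁ + (D + 1) / (μ - L) with hXdef
      have hμLpos : 0 < μ - L := by linarith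
      have hX : x₁ < X := by
        rw [hXdef]
        have : 0 < (D + 1) / (μ - L) := div_pos (by linarith) hμLpos
        linarith
      obtain ⟨ξ, hξ, hs⟩ := exists_hasDerivAt_eq_slope g (deriv g) hX
        (hg.continuous.continuousOn) (fun t _ => (hg t).hasDerivAt)
      have hfξ : deriv g ξ + μ < 0 := hall ξ hξ.1.le
      have hXpos : 0 < X - x₁ := by linarith
      have h1 : g X - g x₁ < -μ * (X - x₁) := by
        rw [hs] at hfξ
        have h2 : (g X - g x₁) / (X - x₁) < -μ := by linarith
        exact (div_lt_iff₀ hXpos).mp h2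
      have h3 : (μ - L) * (X - x₁) = D + 1 := by
        rw [hXdef]
        field_simp
        ring
      have h4 : -(L * (1 + X)) ≤ g X := hlb X (by linarith)
      nlinarith [h1, h3, h4]
    · obtain ⟨x₂, hx₂gt, hx₂0, _, hx₂d⟩ := stmt13_touch f hfd hf1 hall
      have hux₂ : deriv g x₂ = -μ := by
        have h0 : deriv g x₂ + μ = 0 := hx₂0
        linarith
      have hdf : deriv f x₂ = 2 * a * x₂ - deriv F (g x₂) * deriv g x₂ := by
        exact ((hud x₂).add_const μ).deriv
      have hx₂pos : 0 < x₂ := lt_of_le_of_lt hx₁0 hx₂gt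
      have hgx₂ : g x₂ ≤ 0 := hgle x₂ hx₂pos.le
      set y := -g x₂ with hydef
      clear_value y
      have hy0 : 0 ≤ y := by rw [hydef]; linarith
      have hFgx₂ : F (g x₂) = a * x₂ ^ 2 - bF + μ := by
        have h6 := hode x₂
        rw [hux₂] at h6
        linarith
      have hFy : F y = a * x₂ ^ 2 - bF + μ := by
        rw [hydef, hF.even]
        exact hFgx₂
      have hbFμ : |bF| < μ := by
        rw [hμdef]
        nlinarith [mul_nonneg ha.le hLpos.le, hLpos]
      have hFypos : 0 < F y := by
        rw [hFy]
        nlinarith [le_abs_self bF, mul_nonneg ha.le (sq_nonneg x₂)]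
      have hypos : 0 < y := by
        rcases hy0.eq_or_lt with h | h
        · exfalso
          rw [← h, hF.map_zero] at hFypos
          exact lt_irrefl 0 hFypos
        · exact h
      have hyle : y ≤ L * (1 + x₂) := by
        rw [hydef]
        linarith [hlb x₂ hx₂pos.le]
      have hslope2 : F y ≤ y * deriv F y := stmt13_slope hF y hypos
      have hμ4L : 4 * L ≤ μ := by
        rw [hμdef]
        nlinarith [abs_nonneg bF, mul_nonneg ha.le hLpos.le]
      have hμbFeq : |bF| + (4 * L + a * L + 1) = μ := by rw [hμdef]; ring
      have hkey : 2 * a * x₂ < μ * deriv F y := by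
        have h1 : 2 * a * x₂ * (L * (1 + x₂)) < μ * F y := by
          rw [hFy]
          have e1 : 4 * L * (a * x₂ ^ 2) ≤ μ * (a * x₂ ^ 2) :=
            mul_le_mul_of_nonneg_right hμ4L (by positivity)
          have e0 : 4 * L + a * L + 1 ≤ -bF + μ := by linarith [le_abs_self bF]
          have e2 : 4 * L + a * L + 1 ≤ μ * (-bF + μ) := by
            nlinarith [e0, hμ1]
          have e3 : 0 ≤ a * L * (x₂ - 1) ^ 2 := by positivity
          nlinarith [e1, e2, e3, mul_nonneg (mul_nonneg ha.le hLpos.le) (sq_nonneg x₂), hLpos]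
        have h2 : 2 * a * x₂ * y ≤ 2 * a * x₂ * (L * (1 + x₂)) :=
          mul_le_mul_of_nonneg_left hyle (by positivity)
        have h3 : μ * F y ≤ μ * (y * deriv F y) :=
          mul_le_mul_of_nonneg_left hslope2 hμpos.le
        have h4 : (2 * a * x₂) * y < (μ * deriv F y) * y := by nlinarith [h1, h2, h3]
        exact lt_of_mul_lt_mul_right h4 hypos.le
      have hodd := stmt13_dFodd hF y
      have hgx₂eq : g x₂ = -y := by rw [hydef, neg_neg]
      rw [hdf, hux₂, hgx₂eq, hodd] at hx₂d
      linarith [hkey, hx₂d]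
  -- conclusion
  refine ⟨μ, hμpos, ?_⟩
  intro x hx
  constructor
  · rw [abs_le]
    constructor
    · have h1 := hlb x hx
      nlinarith [hμL, hx]
    · have h2 := hgle x hx
      nlinarith [hμpos, hx]
  · rw [abs_le]
    exact ⟨hlb' x hx, hub x hx⟩

/-- Lemma A.5 (bounds): the unique solution `g` on `ℝ` of `g' = a·x² − b_F − F(g)` with
`x·g(x) ≤ 0` satisfies `|g(x)| ≤ K(1+|x|)` and `|g'(x)| ≤ K` for some `K > 0`. -/
theorem stmt13 (F : ℝ → ℝ) (hF : Assumption2 F) (a bF : ℝ) (ha : 0 < a) (g : ℝ → ℝ)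
    (hg : Differentiable ℝ g)
    (hode : ∀ x : ℝ, deriv g x = a * x ^ 2 - bF - F (g x))
    (hsign : ∀ x : ℝ, x * g x ≤ 0) :
    ∃ K > (0 : ℝ), ∀ x : ℝ, |g x| ≤ K * (1 + |x|) ∧ |deriv g x| ≤ K := by
  -- the reflected function satisfies the same hypotheses
  set h : ℝ → ℝ := fun x => -g (-x) with hhdef
  have hH : ∀ x : ℝ, HasDerivAt h (deriv g (-x)) x := by
    intro x
    have h1 : HasDerivAt (fun y : ℝ => g (-y)) (deriv g (-x) * (-1)) x :=
      (hg (-x)).hasDerivAt.comp x (hasDerivAt_neg x)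
    have h2 := h1.neg
    exact h2.congr_deriv (by ring)
  have hgh : Differentiable ℝ h := fun x => (hH x).differentiableAt
  have hdh : ∀ x : ℝ, deriv h x = deriv g (-x) := fun x => (hH x).deriv
  have hode_h : ∀ x : ℝ, deriv h x = a * x ^ 2 - bF - F (h x) := by
    intro x
    rw [hdh, hode]
    have he : F (h x) = F (g (-x)) := by
      have : h x = -g (-x) := rfl
      rw [this, hF.even]
    rw [he]
    ring_nf
  have hsign_h : ∀ x : ℝ, x * h x ≤ 0 := by
    intro x
    have h0 := hsign (-x)
    have : h x = -g (-x) := rfl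
    rw [this]
    nlinarith [h0]
  obtain ⟨K₁, hK₁, hb₁⟩ := stmt13_aux F hF a bF ha g hg hode hsign
  obtain ⟨K₂, hK₂, hb₂⟩ := stmt13_aux F hF a bF ha h hgh hode_h hsign_h
  refine ⟨max K₁ K₂, lt_max_of_lt_left hK₁, ?_⟩
  intro x
  rcases le_total 0 x with hx | hx
  · obtain ⟨hb, hd⟩ := hb₁ x hx
    rw [abs_of_nonneg hx] at *
    constructor
    · calc |g x| ≤ K₁ * (1 + x) := hb
        _ ≤ max K₁ K₂ * (1 + x) :=
          mul_le_mul_of_nonneg_right (le_max_left _ _) (by linarith)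
    · exact le_trans hd (le_max_left _ _)
  · have hx' : 0 ≤ -x := by linarith
    obtain ⟨hb, hd⟩ := hb₂ (-x) hx'
    have he1 : h (-x) = -g x := by
      have : h (-x) = -g (-(-x)) := rfl
      rw [this, neg_neg]
    have he2 : deriv h (-x) = deriv g x := by rw [hdh, neg_neg]
    rw [he1, abs_neg] at hb
    rw [he2] at hd
    rw [abs_of_nonpos hx]
    constructor
    · exact le_trans hb
        (mul_le_mul_of_nonneg_right (le_max_right K₁ K₂) (by linarith))
    · exact le_trans hd (le_max_right _ _)
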